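/- Let H be a real Hilbert space and A : H → H a bounded self-adjoint linear operator satisfying γ‖v‖² ≤ ⟨Av, v⟩ ≤ Γ‖v‖² for all v ∈ H, where 0 < γ ≤ Γ; set μ := 2/(γ + Γ), ρ := (Γ − γ)/(Γ + γ), and let f ∈ H and u* ∈ H with Au* = f. Let S : H → H be non-expansive and let u^α be the unique fixed point of the contraction G(v) := S(v − μ(Av − f)). Let ν ∈ (0,1), u ∈ H, and set u_+ := G(u), r_+ := Au_+ − f. If ‖u_+ − u‖ ≤ ((1 − ρ)ν/(Γρ)) ‖r_+‖, then ‖u_+ − u^α‖ ≤ ν ‖u_+ − u*‖ and consequently ‖u_+ − u*‖ ≤ (1 − ν)^{−1} ‖u^α − u*‖. -/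

import Mathlib

open scoped RealInnerProductSpace

/-- Polarization: a self-adjoint operator whose quadratic form is bounded by `M‖v‖²`
has `‖B v‖ ≤ M ‖v‖`. -/
lemma selfadjoint_norm_apply_le
    {H : Type*} [NormedAddCommGroup H] [InnerProductSpace ℝ H]
    (B : H →L[ℝ] H) (hB : ∀ v w : H, ⟪B v, w⟫ = ⟪v, B w⟫)
    (M : ℝ) (hM : 0 ≤ M) (h : ∀ v : H, |⟪B v, v⟫| ≤ M * ‖v‖ ^ 2)
    (v : H) : ‖B v‖ ≤ M * ‖v‖ := by
  by_cases hv : v = 0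
  · simp [hv]
  by_cases hBv : B v = 0
  · simp [hBv]; positivity
  have key : ∀ w : H, 4 * ⟪B v, w⟫ ≤ 2 * M * (‖v‖ ^ 2 + ‖w‖ ^ 2) := by
    intro w
    have e1 : 4 * ⟪B v, w⟫ = ⟪B (v + w), v + w⟫ - ⟪B (v - w), v - w⟫ := by
      have hsym : ⟪B w, v⟫ = ⟪B v, w⟫ := by
        rw [hB w v, real_inner_comm]
      simp only [map_add, map_sub, inner_add_left, inner_add_right,
        inner_sub_left, inner_sub_right]
      rw [hsym]; ring
    have h1 : ⟪B (v + w), v + w⟫ ≤ M * ‖v + w‖ ^ 2 := le_of_abs_le (h _)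
    have h2 : -(M * ‖v - w‖ ^ 2) ≤ ⟪B (v - w), v - w⟫ := neg_le_of_abs_le (h _)
    have hpar : ‖v + w‖ ^ 2 + ‖v - w‖ ^ 2 = 2 * (‖v‖ ^ 2 + ‖w‖ ^ 2) := by
      have := parallelogram_law_with_norm ℝ v w
      nlinarith [this]
    nlinarith [h1, h2]
  have hBvpos : 0 < ‖B v‖ := norm_pos_iff.mpr hBv
  have hvpos : 0 < ‖v‖ := norm_pos_iff.mpr hv
  have := key ((‖v‖ / ‖B v‖) • B v)
  rw [real_inner_smul_right, norm_smul] at this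
  have hin : ⟪B v, B v⟫ = ‖B v‖ ^ 2 := real_inner_self_eq_norm_sq _
  rw [hin] at this
  have hnn : ‖(‖v‖ / ‖B v‖ : ℝ)‖ = ‖v‖ / ‖B v‖ := by
    rw [Real.norm_eq_abs, abs_of_nonneg (by positivity)]
  rw [hnn] at this
  have h4 : 4 * (‖v‖ / ‖B v‖ * ‖B v‖ ^ 2) = 4 * (‖v‖ * ‖B v‖) := by
    field_simp
  have h5 : (‖v‖ / ‖B v‖ * ‖B v‖) ^ 2 = ‖v‖ ^ 2 := by
    field_simp
  rw [h4, h5] at this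
  nlinarith [this, hvpos, hBvpos]

set_option maxHeartbeats 1600000 in
/-- **A posteriori criterion for decreasing the thresholding parameter.** Let `A` be bounded
self-adjoint with spectrum in `[γ, Γ]`, `μ = 2/(γ+Γ)`, `ρ = (Γ-γ)/(Γ+γ)`, `A u* = f`, `S`
non-expansive, and let `u^α` be the fixed point of `G(v) = S(v - μ(Av - f))`. If
`u₊ = G(u)`, `r₊ = A u₊ - f`, and `‖u₊ - u‖ ≤ ((1-ρ)ν/(Γρ))‖r₊‖` with `ν ∈ (0,1)`, then
`‖u₊ - u^α‖ ≤ ν‖u₊ - u*‖` and consequently `‖u₊ - u*‖ ≤ (1-ν)⁻¹‖u^α - u*‖`. -/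
theorem aposteriori_threshold_criterion
    {H : Type*} [NormedAddCommGroup H] [InnerProductSpace ℝ H] [CompleteSpace H]
    (A : H →L[ℝ] H) (hsa : ∀ v w : H, ⟪A v, w⟫ = ⟪v, A w⟫)
    (γ Γ : ℝ) (hγ : 0 < γ) (hγΓ : γ ≤ Γ)
    (hlow : ∀ v : H, γ * ‖v‖ ^ 2 ≤ ⟪A v, v⟫)
    (hupp : ∀ v : H, ⟪A v, v⟫ ≤ Γ * ‖v‖ ^ 2)
    (f ustar : H) (hsol : A ustar = f)
    (S : H → H) (hS : ∀ v w : H, ‖S v - S w‖ ≤ ‖v - w‖)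
    (uα : H) (huα : uα = S (uα - (2 / (γ + Γ)) • (A uα - f)))
    (ν : ℝ) (hν0 : 0 < ν) (hν1 : ν < 1)
    (u uplus rplus : H)
    (huplus : uplus = S (u - (2 / (γ + Γ)) • (A u - f)))
    (hrplus : rplus = A uplus - f)
    (hcrit : ‖uplus - u‖
        ≤ ((1 - (Γ - γ) / (Γ + γ)) * ν / (Γ * ((Γ - γ) / (Γ + γ)))) * ‖rplus‖) :
    ‖uplus - uα‖ ≤ ν * ‖uplus - ustar‖
    ∧ ‖uplus - ustar‖ ≤ (1 - ν)⁻¹ * ‖uα - ustar‖ := by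
  have hΓ : 0 < Γ := lt_of_lt_of_le hγ hγΓ
  have hsum : 0 < γ + Γ := by linarith
  set μ : ℝ := 2 / (γ + Γ) with hμdef
  set ρ : ℝ := (Γ - γ) / (Γ + γ) with hρdef
  have hρ0 : 0 ≤ ρ := div_nonneg (by linarith) (by linarith)
  have hρ1 : ρ < 1 := by
    rw [hρdef, div_lt_one (by linarith)]; linarith
  have hμpos : 0 < μ := by positivity
  -- the operator B = id - μ A
  set B : H →L[ℝ] H := ContinuousLinearMap.id ℝ H - μ • A with hBdef
  have hBapp : ∀ x : H, B x = x - μ • A x := by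
    intro x
    rw [hBdef]
    simp
  have hBsa : ∀ v w : H, ⟪B v, w⟫ = ⟪v, B w⟫ := by
    intro v w
    simp only [hBapp, inner_sub_left, inner_sub_right, real_inner_smul_left,
      real_inner_smul_right, hsa v w]
  have hBquad : ∀ v : H, |⟪B v, v⟫| ≤ ρ * ‖v‖ ^ 2 := by
    intro v
    have h1 : ⟪B v, v⟫ = ‖v‖ ^ 2 - μ * ⟪A v, v⟫ := by
      simp only [hBapp, inner_sub_left, real_inner_smul_left,
        real_inner_self_eq_norm_sq]
    rw [abs_le, h1]
    have hl := hlow v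
    have hu := hupp v
    constructor
    · have : 1 - μ * Γ = -ρ := by
        rw [hμdef, hρdef]; field_simp; ring
      nlinarith [mul_le_mul_of_nonneg_left hu hμpos.le]
    · have : 1 - μ * γ = ρ := by
        rw [hμdef, hρdef]; field_simp; ring
      nlinarith [mul_le_mul_of_nonneg_left hl hμpos.le]
  have hBnorm : ∀ x : H, ‖B x‖ ≤ ρ * ‖x‖ :=
    selfadjoint_norm_apply_le B hBsa ρ hρ0 hBquad
  have hAquad : ∀ v : H, |⟪A v, v⟫| ≤ Γ * ‖v‖ ^ 2 := by
    intro v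
    rw [abs_le]
    refine ⟨?_, hupp v⟩
    have := hlow v
    nlinarith [sq_nonneg ‖v‖]
  have hAnorm : ∀ x : H, ‖A x‖ ≤ Γ * ‖x‖ :=
    selfadjoint_norm_apply_le A hsa Γ hΓ.le hAquad
  -- contraction estimate
  have hcontr : ‖uplus - uα‖ ≤ ρ * ‖u - uα‖ := by
    conv_lhs => rw [huplus, huα]
    calc ‖S (u - μ • (A u - f)) - S (uα - μ • (A uα - f))‖
        ≤ ‖(u - μ • (A u - f)) - (uα - μ • (A uα - f))‖ := hS _ _
      _ = ‖B (u - uα)‖ := by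
          congr 1
          simp only [hBapp, map_sub, smul_sub]
          abel
      _ ≤ ρ * ‖u - uα‖ := hBnorm _
  have hstep : (1 - ρ) * ‖uplus - uα‖ ≤ ρ * ‖uplus - u‖ := by
    have htri : ‖u - uα‖ ≤ ‖uplus - u‖ + ‖uplus - uα‖ := by
      calc ‖u - uα‖ = ‖(u - uplus) + (uplus - uα)‖ := by abel_nf
        _ ≤ ‖u - uplus‖ + ‖uplus - uα‖ := norm_add_le _ _
        _ = ‖uplus - u‖ + ‖uplus - uα‖ := by rw [norm_sub_rev]
    nlinarith [hcontr, mul_le_mul_of_nonneg_left htri hρ0]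
  -- bound ‖rplus‖ by Γ ‖uplus - ustar‖
  have hrbound : ‖rplus‖ ≤ Γ * ‖uplus - ustar‖ := by
    have : rplus = A (uplus - ustar) := by
      rw [hrplus, map_sub, hsol]
    rw [this]; exact hAnorm _
  -- main estimate: ‖uplus - uα‖ ≤ (ν/Γ) ‖rplus‖
  have hmain : ‖uplus - uα‖ ≤ (ν / Γ) * ‖rplus‖ := by
    rcases eq_or_lt_of_le hρ0 with hρz | hρpos
    · -- ρ = 0 : contraction is degenerate, uplus = uα
      have : (1 - ρ) * ‖uplus - uα‖ ≤ 0 := by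
        rw [← hρz] at hstep ⊢; simpa using hstep
      have h0 : ‖uplus - uα‖ ≤ 0 := by nlinarith
      have : 0 ≤ (ν / Γ) * ‖rplus‖ := by positivity
      linarith
    · have h1ρ : 0 < 1 - ρ := by linarith
      have h2 : ‖uplus - uα‖ ≤ (ρ / (1 - ρ)) * ‖uplus - u‖ := by
        rw [div_mul_eq_mul_div, le_div_iff₀ h1ρ, mul_comm]
        linarith [hstep]
      have h3 : (ρ / (1 - ρ)) * (((1 - ρ) * ν / (Γ * ρ)) * ‖rplus‖)
          = (ν / Γ) * ‖rplus‖ := by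
        field_simp
      calc ‖uplus - uα‖ ≤ (ρ / (1 - ρ)) * ‖uplus - u‖ := h2
        _ ≤ (ρ / (1 - ρ)) * (((1 - ρ) * ν / (Γ * ρ)) * ‖rplus‖) := by
            apply mul_le_mul_of_nonneg_left _ (by positivity)
            exact hcrit
        _ = (ν / Γ) * ‖rplus‖ := h3
  have hfirst : ‖uplus - uα‖ ≤ ν * ‖uplus - ustar‖ := by
    calc ‖uplus - uα‖ ≤ (ν / Γ) * ‖rplus‖ := hmain
      _ ≤ (ν / Γ) * (Γ * ‖uplus - ustar‖) := by
          apply mul_le_mul_of_nonneg_left hrbound (by positivity)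
      _ = ν * ‖uplus - ustar‖ := by field_simp
  refine ⟨hfirst, ?_⟩
  have htri : ‖uplus - ustar‖ ≤ ‖uplus - uα‖ + ‖uα - ustar‖ := by
    calc ‖uplus - ustar‖ = ‖(uplus - uα) + (uα - ustar)‖ := by abel_nf
      _ ≤ ‖uplus - uα‖ + ‖uα - ustar‖ := norm_add_le _ _
  have h1ν : 0 < 1 - ν := by linarith
  rw [inv_mul_eq_div, le_div_iff₀ h1ν]
  nlinarith [hfirst, htri]
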